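/- For every natural number m and real a > −1, ∫₀^∞ z^(2m)/(z⁴+2a z²+1)^(m+1) dz = (π/(2^(3m+3/2)(1+a)^(m+1/2)))·C(2m, m). -/

import Mathlib

open MeasureTheory Real Set

lemma wallis_prod (m : ℕ) :
    (∏ i ∈ Finset.range m, (2*(i:ℝ)+1)/(2*(i:ℝ)+2)) = (Nat.choose (2*m) m : ℝ) / 4^m := by
  induction m with
  | zero => simp
  | succ k ih =>
    rw [Finset.prod_range_succ, ih]
    have hnat := Nat.succ_mul_centralBinom_succ k
    simp only [Nat.centralBinom] at hnat
    have hc : ((k+1 : ℕ) : ℝ) * (Nat.choose (2*(k+1)) (k+1) : ℝ)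
        = 2 * (2*(k:ℝ)+1) * (Nat.choose (2*k) k : ℝ) := by exact_mod_cast congrArg Nat.cast hnat
    push_cast at hc ⊢
    have hk : ((k:ℝ)+1) ≠ 0 := by positivity
    field_simp
    linear_combination (-(2*(4:ℝ)^k)) * hc

lemma J_val (m : ℕ) :
    ∫ x : ℝ, ((1 + x^2)^(m+1))⁻¹ = π * (Nat.choose (2*m) m : ℝ) / 4^m := by
  have hs : MeasurableSet (Ioo (-(π/2)) (π/2)) := measurableSet_Ioo
  have hf' : ∀ x ∈ Ioo (-(π/2)) (π/2),
      HasDerivWithinAt tan (1 / cos x ^ 2) (Ioo (-(π/2)) (π/2)) x := by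
    intro x hx
    exact (hasDerivAt_tan (cos_pos_of_mem_Ioo hx).ne').hasDerivWithinAt
  have key := integral_image_eq_integral_abs_deriv_smul hs hf' injOn_tan
    (fun x : ℝ => ((1 + x^2)^(m+1))⁻¹)
  rw [image_tan_Ioo] at key
  rw [setIntegral_univ] at key
  rw [key]
  have hcong : ∫ x in Ioo (-(π/2)) (π/2), |1 / cos x ^ 2| • ((1 + tan x ^2)^(m+1))⁻¹
      = ∫ x in Ioo (-(π/2)) (π/2), cos x ^ (2*m) := by
    apply setIntegral_congr_fun hs
    intro x hx
    have hcos : 0 < cos x := cos_pos_of_mem_Ioo hx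
    have h1 : 1 + tan x ^ 2 = (cos x ^ 2)⁻¹ := by
      rw [tan_eq_sin_div_cos, div_pow]
      field_simp
      exact cos_sq_add_sin_sq x
    show |1 / cos x ^ 2| * ((1 + tan x ^2)^(m+1))⁻¹ = cos x ^ (2*m)
    rw [h1, abs_of_pos (by positivity), inv_pow, inv_inv, one_div]
    have h2 : cos x ^ (2*(m+1)) = cos x ^ 2 * cos x ^ (2*m) := by ring
    rw [← pow_mul, h2, ← mul_assoc, inv_mul_cancel₀ (by positivity), one_mul]
  rw [hcong]
  have hIoo : ∫ x in Ioo (-(π/2)) (π/2), cos x ^ (2*m)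
      = ∫ x in (-(π/2))..(π/2), cos x ^ (2*m) := by
    rw [intervalIntegral.integral_of_le (by linarith [pi_pos]), integral_Ioc_eq_integral_Ioo]
  rw [hIoo]
  have hshift : ∫ x in (0:ℝ)..π, sin x ^ (2*m) = ∫ x in (-(π/2))..(π/2), cos x ^ (2*m) := by
    have h := intervalIntegral.integral_comp_sub_right (a := (0:ℝ)) (b := π)
      (fun y => cos y ^ (2*m)) (π/2)
    simp only [cos_sub_pi_div_two] at h
    rw [h, sub_half, zero_sub]
  rw [← hshift, integral_sin_pow_even, wallis_prod]
  ring

lemma K_val (m : ℕ) {c : ℝ} (hc : 0 < c) :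
    ∫ x : ℝ, ((x^2 + c)^(m+1))⁻¹
      = π * (Nat.choose (2*m) m : ℝ) / (4^m * c ^ ((m:ℝ) + 1/2)) := by
  have hs : Real.sqrt c > 0 := Real.sqrt_pos.mpr hc
  have key := MeasureTheory.Measure.integral_comp_mul_left
    (fun x : ℝ => ((x^2 + c)^(m+1))⁻¹) (Real.sqrt c)
  have hsq : ∀ x : ℝ, ((Real.sqrt c * x)^2 + c) = c * (1 + x^2) := by
    intro x
    have h : Real.sqrt c ^ 2 = c := Real.sq_sqrt hc.le
    nlinarith [h]
  simp only [hsq] at key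
  have hlhs : ∫ x : ℝ, ((c * (1 + x^2))^(m+1))⁻¹
      = (c^(m+1))⁻¹ * ∫ x : ℝ, ((1 + x^2)^(m+1))⁻¹ := by
    rw [← integral_const_mul]
    congr 1 with x
    rw [mul_pow, mul_inv]
  rw [hlhs, J_val, smul_eq_mul, abs_of_pos (by positivity)] at key
  have h2 : ∫ x : ℝ, ((x^2 + c)^(m+1))⁻¹
      = Real.sqrt c * ((c^(m+1))⁻¹ * (π * (Nat.choose (2*m) m : ℝ) / 4^m)) := by
    have h3 := key.symm
    rw [inv_mul_eq_iff_eq_mul₀ hs.ne'] at h3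
    exact h3
  rw [h2]
  have hrc : c ^ ((m:ℝ) + 1/2) = c^(m+1) / Real.sqrt c := by
    rw [Real.sqrt_eq_rpow, ← Real.rpow_natCast c (m+1), ← Real.rpow_sub hc]
    push_cast
    ring_nf
  rw [hrc]
  have h4 : (0:ℝ) < 4^m := by positivity
  have hcp : (0:ℝ) < c^(m+1) := by positivity
  field_simp

theorem quartic_n_eq_m (m : ℕ) (a : ℝ) (ha : -1 < a) :
    ∫ z in Set.Ioi (0 : ℝ), z ^ (2 * m) / (z ^ 4 + 2 * a * z ^ 2 + 1) ^ (m + 1)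
      = Real.pi / ((2 : ℝ) ^ (3 * (m : ℝ) + 3 / 2) * (1 + a) ^ ((m : ℝ) + 1 / 2))
        * Nat.choose (2 * m) m := by
  set c : ℝ := 2 * (1 + a) with hc_def
  have hc : 0 < c := by simp only [hc_def]; linarith
  set g : ℝ → ℝ := fun u => ((u^2 + c)^(m+1))⁻¹ with hg_def
  set P : ℝ → ℝ := fun z => z ^ 4 + 2 * a * z ^ 2 + 1 with hP_def
  have hP : ∀ z : ℝ, z ≠ 0 → 0 < P z := by
    intro z hz
    have : P z = (z^2 - 1)^2 + c * z^2 := by simp only [hP_def, hc_def]; ring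
    rw [this]
    have hz2 : 0 < z^2 := by positivity
    nlinarith
  -- derivative facts for f z = z - z⁻¹
  have hf' : ∀ z ∈ Ioi (0:ℝ), HasDerivWithinAt (fun z : ℝ => z - z⁻¹)
      (1 + (z^2)⁻¹) (Ioi (0:ℝ)) z := by
    intro z hz
    have h1 : HasDerivAt (fun z : ℝ => z - z⁻¹) (1 - -(z^2)⁻¹) z :=
      (hasDerivAt_id z).sub (hasDerivAt_inv (ne_of_gt hz))
    simpa [sub_neg_eq_add] using h1.hasDerivWithinAt
  have hinj : InjOn (fun z : ℝ => z - z⁻¹) (Ioi (0:ℝ)) := by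
    intro x hx y hy h
    simp only [mem_Ioi] at hx hy
    simp only at h
    have hxy : (x - y) * (x * y + 1) = 0 := by
      field_simp at h
      nlinarith [h]
    rcases mul_eq_zero.mp hxy with h1 | h1
    · linarith
    · nlinarith
  have himage : (fun z : ℝ => z - z⁻¹) '' Ioi (0:ℝ) = univ := by
    ext u
    simp only [mem_image, mem_Ioi, mem_univ, iff_true]
    set s : ℝ := Real.sqrt (u^2 + 4) with hs_def
    have hs2 : s^2 = u^2 + 4 := Real.sq_sqrt (by positivity)
    have hsu : |u| < s := by
      rw [← Real.sqrt_sq_eq_abs, hs_def]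
      exact Real.sqrt_lt_sqrt (by positivity) (by linarith)
    have hzpos : 0 < (u + s) / 2 := by
      have := neg_abs_le u
      linarith
    refine ⟨(u + s) / 2, hzpos, ?_⟩
    have hzne : (u + s) / 2 ≠ 0 := ne_of_gt hzpos
    have hus : (0:ℝ) < u + s := by linarith
    field_simp
    nlinarith [hs2]
  -- change of variables z ↦ z - z⁻¹
  have key := integral_image_eq_integral_abs_deriv_smul measurableSet_Ioi hf' hinj g
  rw [himage, setIntegral_univ] at key
  -- pointwise identity
  have hpt : ∀ z ∈ Ioi (0:ℝ), |1 + (z^2)⁻¹| • g (z - z⁻¹)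
      = z ^ (2*m+2) / P z ^ (m+1) + z ^ (2*m) / P z ^ (m+1) := by
    intro z hz
    simp only [mem_Ioi] at hz
    have hPz : 0 < P z := hP z (ne_of_gt hz)
    have hq : (z - z⁻¹)^2 + c = P z / z^2 := by
      simp only [hP_def, hc_def]
      field_simp
      ring
    rw [smul_eq_mul, abs_of_pos (by positivity), hg_def]
    simp only [hq]
    rw [div_pow, inv_div]
    field_simp
    ring
  -- integrability of g
  have hgc : Continuous g := by
    apply Continuous.inv₀
    · fun_prop
    · intro x; positivity
  set d : ℝ := min 1 c with hd_def
  have hd0 : 0 < d := lt_min one_pos hc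
  have hd1 : d ≤ 1 := min_le_left _ _
  have hdc : d ≤ c := min_le_right _ _
  have hbound : ∀ x : ℝ, ‖g x‖ ≤ (d^(m+1))⁻¹ * (1 + x^2)⁻¹ := by
    intro x
    have hx1 : (1:ℝ) ≤ 1 + x^2 := by nlinarith
    have h1 : d^(m+1) * (1 + x^2) ≤ (x^2 + c)^(m+1) := by
      calc d^(m+1) * (1 + x^2) ≤ d^(m+1) * (1 + x^2)^(m+1) := by
            have h := le_self_pow₀ hx1 (Nat.succ_ne_zero m)
            exact mul_le_mul_of_nonneg_left h (by positivity)
        _ = (d * (1 + x^2))^(m+1) := by rw [mul_pow]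
        _ ≤ (x^2 + c)^(m+1) := by
            apply pow_le_pow_left₀ (by positivity)
            nlinarith
    have hgx : g x = ((x^2 + c)^(m+1))⁻¹ := rfl
    rw [hgx, norm_of_nonneg (by positivity), ← mul_inv]
    exact inv_anti₀ (by positivity) h1
  have hgint : Integrable g :=
    ((integrable_inv_one_add_sq.const_mul ((d^(m+1))⁻¹)).mono'
      hgc.aestronglyMeasurable (ae_of_all _ hbound))
  -- integrability of the two pieces on Ioi 0
  have hsum_int : IntegrableOn
      (fun z : ℝ => z ^ (2*m+2) / P z ^ (m+1) + z ^ (2*m) / P z ^ (m+1)) (Ioi 0) := by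
    have h := (integrableOn_image_iff_integrableOn_abs_deriv_smul
      measurableSet_Ioi hf' hinj g).mp (by rw [himage]; exact hgint.integrableOn)
    exact h.congr_fun hpt measurableSet_Ioi
  have hcontOn : ∀ k : ℕ, ContinuousOn (fun z : ℝ => z ^ k / P z ^ (m+1)) (Ioi 0) := by
    intro k
    apply ContinuousOn.div (by fun_prop) (by fun_prop)
    intro z hz
    exact pow_ne_zero _ (hP z (ne_of_gt hz)).ne'
  have hmono : ∀ k : ℕ, k = 2*m ∨ k = 2*m+2 → IntegrableOn
      (fun z : ℝ => z ^ k / P z ^ (m+1)) (Ioi 0) := by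
    intro k hk
    apply hsum_int.mono' (((hcontOn k).aestronglyMeasurable measurableSet_Ioi))
    filter_upwards [ae_restrict_mem measurableSet_Ioi] with z hz
    simp only [mem_Ioi] at hz
    have hPz : 0 < P z := hP z (ne_of_gt hz)
    rw [norm_of_nonneg (by positivity)]
    have h1 : 0 ≤ z ^ (2*m) / P z ^ (m+1) := by positivity
    have h2 : 0 ≤ z ^ (2*m+2) / P z ^ (m+1) := by positivity
    rcases hk with rfl | rfl <;> linarith
  have h2int := hmono (2*m) (Or.inl rfl)
  have h1int := hmono (2*m+2) (Or.inr rfl)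
  -- inversion z ↦ z⁻¹ to show the two pieces have the same integral
  have hinvim : (fun z : ℝ => z⁻¹) '' Ioi (0:ℝ) = Ioi 0 := by
    ext u
    simp only [mem_image, mem_Ioi]
    constructor
    · rintro ⟨z, hz, rfl⟩; exact inv_pos.mpr hz
    · intro hu; exact ⟨u⁻¹, inv_pos.mpr hu, inv_inv u⟩
  have hfi' : ∀ z ∈ Ioi (0:ℝ), HasDerivWithinAt (fun z : ℝ => z⁻¹)
      (-(z^2)⁻¹) (Ioi (0:ℝ)) z :=
    fun z hz => (hasDerivAt_inv (ne_of_gt hz)).hasDerivWithinAt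
  have hinji : InjOn (fun z : ℝ => z⁻¹) (Ioi (0:ℝ)) :=
    fun x _ y _ h => inv_injective h
  have keyi := integral_image_eq_integral_abs_deriv_smul
    measurableSet_Ioi hfi' hinji (fun z : ℝ => z ^ (2*m) / P z ^ (m+1))
  rw [hinvim] at keyi
  have hpti : ∀ z ∈ Ioi (0:ℝ), |(-(z^2)⁻¹)| • ((z⁻¹) ^ (2*m) / P z⁻¹ ^ (m+1))
      = z ^ (2*m+2) / P z ^ (m+1) := by
    intro z hz
    simp only [mem_Ioi] at hz
    have hPz : 0 < P z := hP z (ne_of_gt hz)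
    have hq : P z⁻¹ = P z / z^4 := by
      simp only [hP_def]
      field_simp
      ring
    rw [smul_eq_mul, abs_neg, abs_of_pos (by positivity), hq, div_pow, inv_pow]
    rw [div_div_eq_mul_div]
    field_simp
    ring
  rw [setIntegral_congr_fun measurableSet_Ioi hpti] at keyi
  -- assemble
  have main : ∫ u : ℝ, g u = 2 * ∫ z in Ioi (0:ℝ), z ^ (2*m) / P z ^ (m+1) := by
    rw [key, setIntegral_congr_fun measurableSet_Ioi hpt, integral_add h1int h2int, ← keyi]
    ring
  have hKv := K_val m hc
  have hgK : ∫ u : ℝ, g u = π * (Nat.choose (2*m) m : ℝ) / (4^m * c ^ ((m:ℝ) + 1/2)) := hKv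
  have hI : ∫ z in Ioi (0:ℝ), z ^ (2*m) / P z ^ (m+1)
      = π * (Nat.choose (2*m) m : ℝ) / (4^m * c ^ ((m:ℝ) + 1/2)) / 2 := by
    rw [← hgK, main]; ring
  have hgoal : ∫ z in Ioi (0:ℝ), z ^ (2*m) / (z ^ 4 + 2*a*z^2 + 1) ^ (m+1)
      = π * (Nat.choose (2*m) m : ℝ) / (4^m * c ^ ((m:ℝ) + 1/2)) / 2 := by
    simpa only [hP_def] using hI
  rw [hgoal]
  -- final arithmetic with rpow
  have ha0 : (0:ℝ) < 1 + a := by linarith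
  have e1 : c ^ ((m:ℝ)+1/2) = (2:ℝ)^((m:ℝ)+1/2) * (1+a)^((m:ℝ)+1/2) := by
    rw [hc_def, Real.mul_rpow (by norm_num) ha0.le]
  have e2 : (4:ℝ)^m = (2:ℝ)^((2*(m:ℝ))) := by
    rw [show (2*(m:ℝ)) = ((2*m : ℕ) : ℝ) by push_cast; ring, Real.rpow_natCast, pow_mul]
    norm_num
  have e3 : (2:ℝ)^(2*(m:ℝ)) * (2:ℝ)^((m:ℝ)+1/2) * 2 = (2:ℝ)^(3*(m:ℝ)+3/2) := by
    calc (2:ℝ)^(2*(m:ℝ)) * 2^((m:ℝ)+1/2) * 2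
        = 2^(2*(m:ℝ)) * 2^((m:ℝ)+1/2) * 2^(1:ℝ) := by rw [Real.rpow_one]
      _ = 2^(2*(m:ℝ)+((m:ℝ)+1/2)+1) := by
          rw [← Real.rpow_add two_pos, ← Real.rpow_add two_pos]
      _ = 2^(3*(m:ℝ)+3/2) := by norm_num; ring_nf
  have p1 : (0:ℝ) < (2:ℝ)^(3*(m:ℝ)+3/2) := Real.rpow_pos_of_pos two_pos _
  have p2 : (0:ℝ) < (1+a)^((m:ℝ)+1/2) := Real.rpow_pos_of_pos ha0 _
  rw [e1, e2]
  rw [div_div, show (2:ℝ)^(2*(m:ℝ)) * ((2:ℝ)^((m:ℝ)+1/2) * (1+a)^((m:ℝ)+1/2)) * 2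
      = (2:ℝ)^(3*(m:ℝ)+3/2) * (1+a)^((m:ℝ)+1/2) from by rw [← e3]; ring]
  ring
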